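/- (Procrustes bound via sin-theta.) For Ŵ, W̃ ∈ ℝ^{n×d} with orthonormal columns, there exists an orthogonal matrix O ∈ O(d) such that ‖ŴO − W̃‖ ≤ √2 ‖sin Θ(Ŵ, W̃)‖, and moreover with Q_W the polar orthogonal factor of W̃ᵀŴ, ‖Ŵ − W̃Q_W‖ ≤ ‖sin Θ(Ŵ, W̃)‖ + ‖sin Θ(Ŵ, W̃)‖². -/

import Mathlib

open scoped BigOperators
open Matrix

/-- Operator (spectral) norm of a real matrix. -/
noncomputable def opNorm {a b : ℕ} (M : Matrix (Fin a) (Fin b) ℝ) : ℝ :=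
  ‖LinearMap.toContinuousLinearMap (Matrix.toEuclideanLin M)‖

open scoped Matrix.Norms.L2Operator

lemma opNorm_eq {a b : ℕ} (M : Matrix (Fin a) (Fin b) ℝ) : opNorm M = ‖M‖ := rfl

lemma norm_transpose' {a b : ℕ} (A : Matrix (Fin a) (Fin b) ℝ) : ‖Aᵀ‖ = ‖A‖ := by
  rw [← Matrix.conjTranspose_eq_transpose_of_trivial, Matrix.l2_opNorm_conjTranspose]

lemma norm_tmul {a b : ℕ} (A : Matrix (Fin a) (Fin b) ℝ) : ‖Aᵀ * A‖ = ‖A‖ * ‖A‖ := by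
  rw [← Matrix.conjTranspose_eq_transpose_of_trivial, Matrix.l2_opNorm_conjTranspose_mul_self]

lemma norm_diagonal_le {b : ℕ} (f : Fin b → ℝ) (c : ℝ) (hc : 0 ≤ c)
    (h : ∀ k, |f k| ≤ c) : ‖Matrix.diagonal f‖ ≤ c := by
  rw [Matrix.l2_opNorm_def]
  apply ContinuousLinearMap.opNorm_le_bound _ hc
  intro x
  simp only [LinearEquiv.trans_apply, LinearMap.coe_toContinuousLinearMap']
  rw [Matrix.toEuclideanLin_apply]
  rw [EuclideanSpace.norm_eq]
  have hx : ‖x‖ = Real.sqrt (∑ i, ‖x i‖ ^ 2) := EuclideanSpace.norm_eq x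
  rw [hx, ← Real.sqrt_sq hc, ← Real.sqrt_mul (by positivity)]
  apply Real.sqrt_le_sqrt
  rw [Finset.mul_sum]
  apply Finset.sum_le_sum
  intro i _
  have : (Matrix.diagonal f *ᵥ (WithLp.equiv 2 _ x)) i = f i * x i := by
    simp [Matrix.mulVec_diagonal]
  simp only [WithLp.equiv_apply] at this
  simp only [WithLp.ofLp_toLp]
  rw [this]
  rw [Real.norm_eq_abs, Real.norm_eq_abs, abs_mul, mul_pow]
  gcongr
  exact h i

lemma abs_le_norm_diagonal {b : ℕ} (f : Fin b → ℝ) (k : Fin b) :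
    |f k| ≤ ‖Matrix.diagonal f‖ := by
  have h := Matrix.l2_opNorm_mulVec (Matrix.diagonal f) (EuclideanSpace.single k 1)
  have h1 : (EuclideanSpace.equiv (Fin b) ℝ).symm (Matrix.diagonal f *ᵥ EuclideanSpace.single k 1) =
      EuclideanSpace.single k (f k) := by
    ext i
    simp only [EuclideanSpace.equiv, WithLp.linearEquiv_symm_apply, PiLp.toLp_apply,
      Matrix.mulVec_diagonal, EuclideanSpace.single_apply]
    by_cases hik : i = k <;> simp [hik, Matrix.mulVec_diagonal, EuclideanSpace.single_apply]
  rw [h1, EuclideanSpace.norm_single, EuclideanSpace.norm_single] at h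
  simpa using h

lemma norm_one_le' {b : ℕ} : ‖(1 : Matrix (Fin b) (Fin b) ℝ)‖ ≤ 1 := by
  rw [← Matrix.diagonal_one]
  exact norm_diagonal_le _ 1 zero_le_one (fun k => by simp)

lemma norm_colorth_le_one {a b : ℕ} (A : Matrix (Fin a) (Fin b) ℝ)
    (h : Aᵀ * A = 1) : ‖A‖ ≤ 1 := by
  have h1 : ‖A‖ * ‖A‖ ≤ 1 := by rw [← norm_tmul, h]; exact norm_one_le'
  nlinarith [norm_nonneg A]

lemma norm_conj_le {a b c : ℕ} (U : Matrix (Fin a) (Fin b) ℝ)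
    (X : Matrix (Fin b) (Fin c) ℝ) (V : Matrix (Fin c) (Fin c) ℝ)
    (hU : ‖U‖ ≤ 1) (hV : ‖V‖ ≤ 1) : ‖U * X * V‖ ≤ ‖X‖ := by
  calc ‖U * X * V‖ ≤ ‖U * X‖ * ‖V‖ := Matrix.l2_opNorm_mul _ _
    _ ≤ (‖U‖ * ‖X‖) * ‖V‖ := by
        have := Matrix.l2_opNorm_mul U X
        have := norm_nonneg V
        nlinarith
    _ ≤ 1 * ‖X‖ * 1 := by gcongr <;> positivity
    _ = ‖X‖ := by ring



/-- Procrustes bound via sin-theta (Cai–Zhang 2018, Lemma 1, plus the polar-factor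
bound): for `Ŵ, W̃ ∈ ℝ^{n×d}` with orthonormal columns, there is an orthogonal
`O ∈ O(d)` with `‖ŴO − W̃‖ ≤ √2 ‖sinΘ(Ŵ,W̃)‖`, where `‖sinΘ(Ŵ,W̃)‖` denotes the
operator norm of `(I − W̃W̃ᵀ)Ŵ`; moreover with `Q_W = U₁U₂ᵀ` the orthogonal polar
factor of the SVD `W̃ᵀŴ = U₁DU₂ᵀ`, `‖Ŵ − W̃Q_W‖ ≤ ‖sinΘ‖ + ‖sinΘ‖²`. -/
theorem procrustes_sinTheta_bounds (n d : ℕ)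
    (What Wtil : Matrix (Fin n) (Fin d) ℝ)
    (hWhat : Whatᵀ * What = 1) (hWtil : Wtilᵀ * Wtil = 1)
    (U₁ U₂ : Matrix (Fin d) (Fin d) ℝ)
    (hU₁ : U₁ ∈ Matrix.orthogonalGroup (Fin d) ℝ)
    (hU₂ : U₂ ∈ Matrix.orthogonalGroup (Fin d) ℝ)
    (D : Fin d → ℝ) (hD : ∀ k, 0 ≤ D k)
    (hsvd : Wtilᵀ * What = U₁ * Matrix.diagonal D * U₂ᵀ) :
    (∃ O ∈ Matrix.orthogonalGroup (Fin d) ℝ,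
      opNorm (What * O - Wtil) ≤
        Real.sqrt 2 * opNorm ((1 - Wtil * Wtilᵀ) * What)) ∧
      opNorm (What - Wtil * (U₁ * U₂ᵀ)) ≤
        opNorm ((1 - Wtil * Wtilᵀ) * What) + (opNorm ((1 - Wtil * Wtilᵀ) * What)) ^ 2 := by
  simp only [opNorm_eq]
  -- orthogonality facts
  have star_eq : ∀ (A : Matrix (Fin d) (Fin d) ℝ), star A = Aᵀ := fun A => by
    rw [Matrix.star_eq_conjTranspose, Matrix.conjTranspose_eq_transpose_of_trivial]
  have hU₁a : U₁ᵀ * U₁ = 1 := by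
    have := (Matrix.mem_orthogonalGroup_iff' (Fin d) ℝ).mp hU₁
    exact this
  have hU₁b : U₁ * U₁ᵀ = 1 := by
    have := (Matrix.mem_orthogonalGroup_iff (Fin d) ℝ).mp hU₁
    exact this
  have hU₂a : U₂ᵀ * U₂ = 1 := by
    have := (Matrix.mem_orthogonalGroup_iff' (Fin d) ℝ).mp hU₂
    exact this
  have hU₂b : U₂ * U₂ᵀ = 1 := by
    have := (Matrix.mem_orthogonalGroup_iff (Fin d) ℝ).mp hU₂
    exact this
  have hs0 : (0:ℝ) ≤ ‖(1 - Wtil * Wtilᵀ) * What‖ := norm_nonneg _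
  -- norms ≤ 1
  have hWhat1 : ‖What‖ ≤ 1 := norm_colorth_le_one _ hWhat
  have hWtil1 : ‖Wtil‖ ≤ 1 := norm_colorth_le_one _ hWtil
  have hU₁n : ‖U₁‖ ≤ 1 := norm_colorth_le_one _ hU₁a
  have hU₂n : ‖U₂‖ ≤ 1 := norm_colorth_le_one _ hU₂a
  have hU₁tn : ‖U₁ᵀ‖ ≤ 1 := by rw [norm_transpose']; exact hU₁n
  have hU₂tn : ‖U₂ᵀ‖ ≤ 1 := by rw [norm_transpose']; exact hU₂n
  have hWtiltn : ‖Wtilᵀ‖ ≤ 1 := by rw [norm_transpose']; exact hWtil1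
  -- M transpose
  have hMt : (Wtilᵀ * What)ᵀ = U₂ * Matrix.diagonal D * U₁ᵀ := by
    rw [hsvd]
    simp [Matrix.transpose_mul, Matrix.diagonal_transpose, Matrix.mul_assoc]
  have hMtW : (Wtilᵀ * What)ᵀ = Whatᵀ * Wtil := by
    rw [Matrix.transpose_mul, Matrix.transpose_transpose]
  -- MᵀM
  have hMM : (Wtilᵀ * What)ᵀ * (Wtilᵀ * What)
      = U₂ * Matrix.diagonal (fun k => D k ^ 2) * U₂ᵀ := by
    rw [hMt, hsvd]
    have h1 : U₂ * Matrix.diagonal D * U₁ᵀ * (U₁ * Matrix.diagonal D * U₂ᵀ)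
        = U₂ * (Matrix.diagonal D * ((U₁ᵀ * U₁) * Matrix.diagonal D)) * U₂ᵀ := by
      simp only [Matrix.mul_assoc]
    rw [h1, hU₁a, Matrix.one_mul, Matrix.diagonal_mul_diagonal]
    congr 1
    ext k
    simp [sq]
  -- SᵀS = 1 - MᵀM
  have hPP : (Wtil * Wtilᵀ) * (Wtil * Wtilᵀ) = Wtil * Wtilᵀ := by
    calc (Wtil * Wtilᵀ) * (Wtil * Wtilᵀ) = Wtil * ((Wtilᵀ * Wtil) * Wtilᵀ) := by
          simp only [Matrix.mul_assoc]
      _ = Wtil * Wtilᵀ := by rw [hWtil, Matrix.one_mul]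
  have hSS : ((1 - Wtil * Wtilᵀ) * What)ᵀ * ((1 - Wtil * Wtilᵀ) * What)
      = 1 - (Wtilᵀ * What)ᵀ * (Wtilᵀ * What) := by
    have hPt : (1 - Wtil * Wtilᵀ)ᵀ = 1 - Wtil * Wtilᵀ := by
      simp [Matrix.transpose_sub, Matrix.transpose_mul]
    rw [Matrix.transpose_mul, hPt]
    have hQQ : (1 - Wtil * Wtilᵀ) * (1 - Wtil * Wtilᵀ) = 1 - Wtil * Wtilᵀ := by
      calc (1 - Wtil * Wtilᵀ) * (1 - Wtil * Wtilᵀ)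
          = 1 - Wtil * Wtilᵀ - Wtil * Wtilᵀ + Wtil * Wtilᵀ * (Wtil * Wtilᵀ) := by noncomm_ring
        _ = 1 - Wtil * Wtilᵀ := by rw [hPP]; abel
    have h1 : (1 - Wtil * Wtilᵀ) * ((1 - Wtil * Wtilᵀ) * What)
        = (1 - Wtil * Wtilᵀ) * What := by
      rw [← Matrix.mul_assoc, hQQ]
    rw [Matrix.mul_assoc Whatᵀ, h1]
    calc Whatᵀ * ((1 - Wtil * Wtilᵀ) * What)
        = Whatᵀ * What - Whatᵀ * Wtil * (Wtilᵀ * What) := by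
          rw [Matrix.sub_mul, Matrix.one_mul, Matrix.mul_sub]
          simp only [Matrix.mul_assoc]
      _ = 1 - (Wtilᵀ * What)ᵀ * (Wtilᵀ * What) := by rw [hWhat, hMtW]
  -- s^2 = ‖1 - MᵀM‖
  have hs2 : ‖(1 : Matrix (Fin d) (Fin d) ℝ) - (Wtilᵀ * What)ᵀ * (Wtilᵀ * What)‖
      = ‖(1 - Wtil * Wtilᵀ) * What‖ ^ 2 := by
    rw [← hSS, norm_tmul, sq]
  -- D k ≤ 1
  have hDle1 : ∀ k, D k ≤ 1 := by
    intro k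
    have hMnorm : ‖Wtilᵀ * What‖ ≤ 1 := by
      calc ‖Wtilᵀ * What‖ ≤ ‖Wtilᵀ‖ * ‖What‖ := Matrix.l2_opNorm_mul _ _
        _ ≤ 1 * 1 := by gcongr <;> positivity
        _ = 1 := by ring
    have hdiagD : Matrix.diagonal D = U₁ᵀ * (Wtilᵀ * What) * U₂ := by
      rw [hsvd]
      refine Eq.symm ?_
      calc U₁ᵀ * (U₁ * Matrix.diagonal D * U₂ᵀ) * U₂
          = (U₁ᵀ * U₁) * Matrix.diagonal D * (U₂ᵀ * U₂) := by simp only [Matrix.mul_assoc]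
        _ = Matrix.diagonal D := by rw [hU₁a, hU₂a, Matrix.one_mul, Matrix.mul_one]
    have h1 : ‖Matrix.diagonal D‖ ≤ 1 := by
      rw [hdiagD]
      exact le_trans (norm_conj_le _ _ _ hU₁tn hU₂n) hMnorm
    calc D k ≤ |D k| := le_abs_self _
      _ ≤ ‖Matrix.diagonal D‖ := abs_le_norm_diagonal D k
      _ ≤ 1 := h1
  -- key: 1 - D k ^ 2 ≤ s ^ 2
  have hkey : ∀ k, 1 - D k ^ 2 ≤ ‖(1 - Wtil * Wtilᵀ) * What‖ ^ 2 := by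
    intro k
    have hdiag2 : Matrix.diagonal (fun k => 1 - D k ^ 2)
        = U₂ᵀ * ((1 : Matrix (Fin d) (Fin d) ℝ) - (Wtilᵀ * What)ᵀ * (Wtilᵀ * What)) * U₂ := by
      rw [Matrix.mul_sub, Matrix.sub_mul, Matrix.mul_one, hU₂a, hMM]
      have h3 : U₂ᵀ * (U₂ * Matrix.diagonal (fun k => D k ^ 2) * U₂ᵀ) * U₂
          = (U₂ᵀ * U₂) * Matrix.diagonal (fun k => D k ^ 2) * (U₂ᵀ * U₂) := by
        simp only [Matrix.mul_assoc]
      rw [h3, hU₂a, Matrix.one_mul, Matrix.mul_one]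
      rw [← Matrix.diagonal_one, ← Matrix.diagonal_sub]
    have h1 : ‖Matrix.diagonal (fun k => 1 - D k ^ 2)‖
        ≤ ‖(1 - Wtil * Wtilᵀ) * What‖ ^ 2 := by
      rw [hdiag2, ← hs2]
      exact norm_conj_le _ _ _ hU₂tn hU₂n
    calc 1 - D k ^ 2 ≤ |1 - D k ^ 2| := le_abs_self _
      _ ≤ ‖Matrix.diagonal (fun k => 1 - D k ^ 2)‖ :=
          abs_le_norm_diagonal (fun k => 1 - D k ^ 2) k
      _ ≤ _ := h1
  have habs : ∀ k, |1 - D k| ≤ ‖(1 - Wtil * Wtilᵀ) * What‖ ^ 2 := by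
    intro k
    have h0 : 0 ≤ 1 - D k := by linarith [hDle1 k]
    rw [abs_of_nonneg h0]
    have : 1 - D k ≤ 1 - D k ^ 2 := by nlinarith [hD k, hDle1 k]
    linarith [hkey k]
  have hs2nn : (0:ℝ) ≤ ‖(1 - Wtil * Wtilᵀ) * What‖ ^ 2 := sq_nonneg _
  constructor
  · -- Part 1
    refine ⟨U₂ * U₁ᵀ, ?_, ?_⟩
    · have h1 : U₁ᵀ = star U₁ := (star_eq U₁).symm
      rw [h1]
      exact mul_mem hU₂ (Unitary.star_mem hU₁)
    · have hOt : (U₂ * U₁ᵀ)ᵀ = U₁ * U₂ᵀ := by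
        simp [Matrix.transpose_mul]
      have hF : Wtilᵀ * What * (U₂ * U₁ᵀ) = U₁ * Matrix.diagonal D * U₁ᵀ := by
        rw [hsvd]
        calc U₁ * Matrix.diagonal D * U₂ᵀ * (U₂ * U₁ᵀ)
            = U₁ * Matrix.diagonal D * ((U₂ᵀ * U₂) * U₁ᵀ) := by simp only [Matrix.mul_assoc]
          _ = U₁ * Matrix.diagonal D * U₁ᵀ := by rw [hU₂a, Matrix.one_mul]
      have hd1 : Matrix.diagonal (fun k => 1 - D k)
          = 1 - Matrix.diagonal D := by
        rw [← Matrix.diagonal_one, ← Matrix.diagonal_sub]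
      have hGalt : U₁ * Matrix.diagonal (fun k => 1 - D k) * U₁ᵀ
          = 1 - U₁ * Matrix.diagonal D * U₁ᵀ := by
        rw [hd1, Matrix.mul_sub, Matrix.mul_one, Matrix.sub_mul, hU₁b]
      have hEE : (What * (U₂ * U₁ᵀ) - Wtil)ᵀ * (What * (U₂ * U₁ᵀ) - Wtil)
          = U₁ * Matrix.diagonal (fun k => 1 - D k) * U₁ᵀ
            + U₁ * Matrix.diagonal (fun k => 1 - D k) * U₁ᵀ := by
        have hEt : (What * (U₂ * U₁ᵀ) - Wtil)ᵀ = (U₁ * U₂ᵀ) * Whatᵀ - Wtilᵀ := by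
          rw [Matrix.transpose_sub, Matrix.transpose_mul, hOt]
        rw [hEt, Matrix.sub_mul, Matrix.mul_sub, Matrix.mul_sub]
        have e1 : U₁ * U₂ᵀ * Whatᵀ * (What * (U₂ * U₁ᵀ)) = 1 := by
          calc U₁ * U₂ᵀ * Whatᵀ * (What * (U₂ * U₁ᵀ))
              = U₁ * (U₂ᵀ * ((Whatᵀ * What) * (U₂ * U₁ᵀ))) := by simp only [Matrix.mul_assoc]
            _ = U₁ * (U₂ᵀ * (U₂ * U₁ᵀ)) := by rw [hWhat, Matrix.one_mul]
            _ = U₁ * ((U₂ᵀ * U₂) * U₁ᵀ) := by simp only [Matrix.mul_assoc]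
            _ = 1 := by rw [hU₂a, Matrix.one_mul, hU₁b]
        have e2 : U₁ * U₂ᵀ * Whatᵀ * Wtil = U₁ * Matrix.diagonal D * U₁ᵀ := by
          have h5 : U₁ * U₂ᵀ * Whatᵀ * Wtil = (Wtilᵀ * What * (U₂ * U₁ᵀ))ᵀ := by
            rw [Matrix.transpose_mul, hOt, hMtW]
            simp only [Matrix.mul_assoc]
          rw [h5, hF]
          simp [Matrix.transpose_mul, Matrix.diagonal_transpose, Matrix.mul_assoc]
        have e3 : Wtilᵀ * (What * (U₂ * U₁ᵀ)) = U₁ * Matrix.diagonal D * U₁ᵀ := by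
          rw [← Matrix.mul_assoc, hF]
        rw [e1, e2, e3, hWtil, hGalt]
        abel
      -- conclude part 1
      have hnormEE : ‖(What * (U₂ * U₁ᵀ) - Wtil)‖ ^ 2
          ≤ 2 * ‖(1 - Wtil * Wtilᵀ) * What‖ ^ 2 := by
        have hGle : ‖U₁ * Matrix.diagonal (fun k => 1 - D k) * U₁ᵀ‖
            ≤ ‖(1 - Wtil * Wtilᵀ) * What‖ ^ 2 := by
          refine le_trans (norm_conj_le _ _ _ hU₁n hU₁tn) ?_
          exact norm_diagonal_le _ _ hs2nn habs
        calc ‖(What * (U₂ * U₁ᵀ) - Wtil)‖ ^ 2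
            = ‖(What * (U₂ * U₁ᵀ) - Wtil)ᵀ * (What * (U₂ * U₁ᵀ) - Wtil)‖ := by
              rw [norm_tmul, sq]
          _ = ‖U₁ * Matrix.diagonal (fun k => 1 - D k) * U₁ᵀ
                + U₁ * Matrix.diagonal (fun k => 1 - D k) * U₁ᵀ‖ := by rw [hEE]
          _ ≤ ‖U₁ * Matrix.diagonal (fun k => 1 - D k) * U₁ᵀ‖
                + ‖U₁ * Matrix.diagonal (fun k => 1 - D k) * U₁ᵀ‖ := norm_add_le _ _
          _ ≤ 2 * ‖(1 - Wtil * Wtilᵀ) * What‖ ^ 2 := by linarith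
      have h2 : ‖What * (U₂ * U₁ᵀ) - Wtil‖
          = Real.sqrt (‖What * (U₂ * U₁ᵀ) - Wtil‖ ^ 2) := by
        rw [Real.sqrt_sq (norm_nonneg _)]
      rw [h2]
      calc Real.sqrt (‖What * (U₂ * U₁ᵀ) - Wtil‖ ^ 2)
          ≤ Real.sqrt (2 * ‖(1 - Wtil * Wtilᵀ) * What‖ ^ 2) := Real.sqrt_le_sqrt hnormEE
        _ = Real.sqrt 2 * ‖(1 - Wtil * Wtilᵀ) * What‖ := by
            rw [Real.sqrt_mul (by norm_num), Real.sqrt_sq hs0]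
  · -- Part 2
    have hMQ : Wtilᵀ * What - U₁ * U₂ᵀ = U₁ * Matrix.diagonal (fun k => D k - 1) * U₂ᵀ := by
      rw [hsvd]
      have : Matrix.diagonal (fun k => D k - 1) = Matrix.diagonal D - 1 := by
        rw [← Matrix.diagonal_one, ← Matrix.diagonal_sub]
      rw [this, Matrix.mul_sub, Matrix.mul_one, Matrix.sub_mul]
    have hsplit : What - Wtil * (U₁ * U₂ᵀ)
        = (1 - Wtil * Wtilᵀ) * What + Wtil * (Wtilᵀ * What - U₁ * U₂ᵀ) := by
      rw [Matrix.sub_mul, Matrix.one_mul, Matrix.mul_sub]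
      simp only [Matrix.mul_assoc]
      abel
    rw [hsplit]
    have hWMQ : ‖Wtil * (Wtilᵀ * What - U₁ * U₂ᵀ)‖ ≤ ‖(1 - Wtil * Wtilᵀ) * What‖ ^ 2 := by
      calc ‖Wtil * (Wtilᵀ * What - U₁ * U₂ᵀ)‖
          ≤ ‖Wtil‖ * ‖Wtilᵀ * What - U₁ * U₂ᵀ‖ := Matrix.l2_opNorm_mul _ _
        _ ≤ 1 * ‖Wtilᵀ * What - U₁ * U₂ᵀ‖ := by gcongr
        _ = ‖Wtilᵀ * What - U₁ * U₂ᵀ‖ := by ring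
        _ ≤ ‖(1 - Wtil * Wtilᵀ) * What‖ ^ 2 := by
            rw [hMQ]
            refine le_trans (norm_conj_le _ _ _ hU₁n hU₂tn) ?_
            refine norm_diagonal_le _ _ hs2nn (fun k => ?_)
            rw [abs_sub_comm]
            exact habs k
    calc ‖(1 - Wtil * Wtilᵀ) * What + Wtil * (Wtilᵀ * What - U₁ * U₂ᵀ)‖
        ≤ ‖(1 - Wtil * Wtilᵀ) * What‖ + ‖Wtil * (Wtilᵀ * What - U₁ * U₂ᵀ)‖ := norm_add_le _ _
      _ ≤ ‖(1 - Wtil * Wtilᵀ) * What‖ + ‖(1 - Wtil * Wtilᵀ) * What‖ ^ 2 := by linarith
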